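/- For every family A : ZMod N → Matrix (Fin d) (Fin d) ℂ, the trace of the cyclic time-translation operator times the slice-wise Kronecker product equals the ordinary trace of the time-ordered matrix product: Tr(𝒮 * (⊗_t A t)) = tr(A (N−1) * A (N−2) * ⋯ * A 1 * A 0), where on the right-hand side the factors A k (with k ∈ {0,…,N−1} viewed in ZMod N) are multiplied in strictly decreasing order of the slice index k. -/

import Mathlib

open Matrix Complex

/-- The slice-wise Kronecker product `⊗_t A t` on the `N`-fold tensor power of `ℂ^d`,
realized via matrices indexed by functions `ZMod N → Fin d`. -/
noncomputable def sliceProd (N d : ℕ) [NeZero N]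
    (A : ZMod N → Matrix (Fin d) (Fin d) ℂ) :
    Matrix (ZMod N → Fin d) (ZMod N → Fin d) ℂ :=
  Matrix.of fun f g => ∏ t : ZMod N, A t (f t) (g t)

/-- The cyclic time-translation operator `𝒮` (representing `e^{iεP}`): the permutation
matrix with entries `𝒮 f g = 1` if `f t = g (t − 1)` for all `t`, and `0` otherwise. -/
noncomputable def timeShift (N d : ℕ) [NeZero N] :
    Matrix (ZMod N → Fin d) (ZMod N → Fin d) ℂ :=
  Matrix.of fun f g => if ∀ t : ZMod N, f t = g (t - 1) then 1 else 0

noncomputable def pathE (d : ℕ) (B : ℕ → Matrix (Fin d) (Fin d) ℂ) :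
    ℕ → Matrix (Fin d) (Fin d) ℂ
  | 0 => 1
  | n + 1 => B n * pathE d B n

lemma prod_eq_pathE (d n : ℕ) (B : ℕ → Matrix (Fin d) (Fin d) ℂ) :
    ((List.range n).reverse.map (fun k => B k)).prod = pathE d B n := by
  induction n with
  | zero => simp [pathE]
  | succ n ih =>
    rw [List.range_succ, List.reverse_append, List.reverse_singleton, List.singleton_append,
      List.map_cons, List.prod_cons, ih]
    rfl

lemma pathE_apply (d : ℕ) (B : ℕ → Matrix (Fin d) (Fin d) ℂ) :
    ∀ (n : ℕ) (i j : Fin d), pathE d B n i j =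
      ∑ v : Fin n → Fin d, if (Fin.snoc v i : Fin (n+1) → Fin d) 0 = j then
        ∏ t : Fin n, B t ((Fin.snoc v i : Fin (n+1) → Fin d) t.succ)
          ((Fin.snoc v i : Fin (n+1) → Fin d) t.castSucc) else 0 := by
  intro n
  induction n with
  | zero =>
    intro i j
    simp [pathE, Matrix.one_apply, Fin.snoc, eq_comm]
  | succ n ih =>
    intro i j
    have h1 : pathE d B (n+1) i j = ∑ k, B n i k * pathE d B n k j := by
      simp [pathE, Matrix.mul_apply]
    rw [h1]
    rw [← (Fin.snocEquiv (fun _ : Fin (n+1) => Fin d)).sum_comp]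
    rw [Fintype.sum_prod_type]
    refine Finset.sum_congr rfl fun k _ => ?_
    rw [ih k j, Finset.mul_sum]
    refine Finset.sum_congr rfl fun v _ => ?_
    have hsnoc : ((Fin.snocEquiv (fun _ : Fin (n+1) => Fin d)) (k, v) : Fin (n+1) → Fin d)
        = Fin.snoc v k := rfl
    rw [hsnoc]
    set w : Fin (n+1) → Fin d := Fin.snoc v k with hw
    have h0 : (Fin.snoc w i : Fin (n+2) → Fin d) 0 = w 0 := by
      have : (0 : Fin (n+2)) = Fin.castSucc 0 := rfl
      rw [this, Fin.snoc_castSucc]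
    rw [h0, mul_ite, mul_zero]
    congr 1
    rw [Fin.prod_univ_castSucc, mul_comm (B n i k)]
    congr 1
    · refine Finset.prod_congr rfl fun t _ => ?_
      rw [Fin.succ_castSucc, Fin.snoc_castSucc, Fin.snoc_castSucc]
      simp
    · have e2 : ((Fin.last n).succ : Fin (n+2)) = Fin.last (n+1) := rfl
      rw [e2, Fin.snoc_last, Fin.snoc_castSucc, hw, Fin.snoc_last]
      simp

lemma trace_pathE (d m : ℕ) (B : ℕ → Matrix (Fin d) (Fin d) ℂ) :
    Matrix.trace (pathE d B (m+1)) =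
      ∑ v : Fin (m+1) → Fin d, ∏ t : Fin (m+1),
        B t ((Fin.snoc v (v 0) : Fin (m+2) → Fin d) t.succ) (v t) := by
  rw [Matrix.trace]
  simp only [Matrix.diag, pathE_apply]
  rw [Finset.sum_comm]
  refine Finset.sum_congr rfl fun v _ => ?_
  have h0 : ∀ i : Fin d, (Fin.snoc v i : Fin (m+2) → Fin d) 0 = v 0 := by
    intro i
    have : (0 : Fin (m+2)) = Fin.castSucc 0 := rfl
    rw [this, Fin.snoc_castSucc]
  simp only [h0]
  rw [Finset.sum_ite_eq Finset.univ (v 0)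
    (fun i => ∏ t : Fin (m+1), B t ((Fin.snoc v i : Fin (m+2) → Fin d) t.succ)
      ((Fin.snoc v i : Fin (m+2) → Fin d) t.castSucc))]
  simp only [Finset.mem_univ, if_true]
  refine Finset.prod_congr rfl fun t _ => ?_
  rw [Fin.snoc_castSucc]

lemma snoc_succ (d m : ℕ) (v : Fin (m+1) → Fin d) (t : Fin (m+1)) :
    (Fin.snoc v (v 0) : Fin (m+2) → Fin d) t.succ = v (t + 1) := by
  rcases eq_or_ne t (Fin.last m) with h | h
  · subst h
    have h1 : (Fin.last m).succ = Fin.last (m+1) := rfl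
    rw [h1, Fin.snoc_last, Fin.last_add_one]
  · have hlt : (t : ℕ) < m := by
      have h2 := t.isLt
      have h3 : (t : ℕ) ≠ m := fun hc => h (Fin.ext (by simp [hc]))
      omega
    have h2 : t.succ = Fin.castSucc (t + 1) := by
      ext
      simp [Fin.val_add_one_of_lt, Fin.lt_iff_val_lt_val, hlt]
    rw [h2, Fin.snoc_castSucc]


/-- `Tr(𝒮 * (⊗_t A t)) = tr(A (N−1) * A (N−2) * ⋯ * A 1 * A 0)`, the time-ordered
matrix product with factors in strictly decreasing order of the slice index. -/
theorem trace_timeShift_sliceProd (N d : ℕ) [NeZero N] (hd : 1 ≤ d)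
    (A : ZMod N → Matrix (Fin d) (Fin d) ℂ) :
    Matrix.trace (timeShift N d * sliceProd N d A) =
      Matrix.trace (((List.range N).reverse.map
        (fun k => A (k : ZMod N))).prod) := by
  obtain ⟨m, rfl⟩ : ∃ m, N = m + 1 :=
    ⟨N - 1, (Nat.succ_pred_eq_of_pos (Nat.pos_of_ne_zero (NeZero.ne N))).symm⟩
  have hcast : ∀ L : List ℕ, ((do let a ← L; pure ((a : ℕ) : ZMod (m+1))) : List (ZMod (m+1)))
      = L.map (fun a => ((a : ℕ) : ZMod (m+1))) := by
    intro L
    induction L with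
    | nil => rfl
    | cons a L ih => simp only [List.map_cons]; exact congrArg _ ih
  rw [hcast, List.map_map]
  rw [show ((fun k : ZMod (m+1) => A k) ∘ fun a : ℕ => ((a : ℕ) : ZMod (m+1)))
      = fun k : ℕ => A ((k : ℕ) : ZMod (m+1)) from rfl]
  rw [prod_eq_pathE d (m+1) (fun k => A (k : ZMod (m+1))), trace_pathE]
  have hL : Matrix.trace (timeShift (m+1) d * sliceProd (m+1) d A)
      = ∑ f : ZMod (m+1) → Fin d, ∏ t : ZMod (m+1), A t (f (t+1)) (f t) := by
    rw [Matrix.trace]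
    simp only [Matrix.diag, Matrix.mul_apply, timeShift, sliceProd, Matrix.of_apply]
    refine Finset.sum_congr rfl fun f _ => ?_
    rw [Finset.sum_eq_single (fun s : ZMod (m+1) => f (s+1))]
    · simp
    · intro g _ hg
      rw [if_neg, zero_mul]
      intro hc
      exact hg (funext fun s => by rw [hc (s+1)]; simp)
    · simp
  rw [hL]
  refine Fintype.sum_equiv
    (Equiv.refl ((ZMod (m+1) → Fin d)) : (ZMod (m+1) → Fin d) ≃ (Fin (m+1) → Fin d))
    _ _ fun f => ?_
  refine Fintype.prod_equiv
    (Equiv.refl (ZMod (m+1)) : ZMod (m+1) ≃ Fin (m+1)) _ _ fun t => ?_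
  erw [snoc_succ]
  congr 1
  exact (ZMod.natCast_zmod_val t).symm
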